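/- Let N be a normal subgroup of a finite group G and H ≤ G. If H is submodular in G, then HN/N is submodular in G/N and HN is submodular in G. Conversely, if N ≤ H and H/N is submodular in G/N, then H is submodular in G. -/
import Mathlib


universe u

/-- A class of groups is subgroup-closed if it is closed under taking subgroups. -/
def IsSubgroupClosed (F : ∀ (G : Type u) [Group G], Prop) : Prop :=
  ∀ (G : Type u) [Group G] (H : Subgroup G), F G → F H

/-- A formation: a class of groups closed under isomorphisms, quotients and
subdirect products. -/
structure IsFormation (F : ∀ (G : Type u) [Group G], Prop) : Prop where
  iso : ∀ (G H : Type u) [Group G] [Group H], G ≃* H → F G → F H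
  quot : ∀ (G : Type u) [Group G] (N : Subgroup G) (_ : N.Normal), F G → F (G ⧸ N)
  subdirect : ∀ (G : Type u) [Group G] (N₁ N₂ : Subgroup G) (_ : N₁.Normal) (_ : N₂.Normal),
    F (G ⧸ N₁) → F (G ⧸ N₂) → N₁ ⊓ N₂ = ⊥ → F G

/-- The 𝔉-fResidual of `G`: the smallest normal subgroup with quotient in `F`. -/
def fResidual (F : ∀ (G : Type u) [Group G], Prop) (G : Type u) [Group G] : Subgroup G :=
  sInf {N : Subgroup G | ∃ _ : N.Normal, F (G ⧸ N)}

/-- `KSubnormal F H K` : there is a chain `H = H₀ ≤ … ≤ Hₙ = K` of subgroups of `G`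
such that each `Hᵢ` is normal in `Hᵢ₊₁` or contains the `F`-fResidual of `Hᵢ₊₁`. -/
inductive KSubnormal (F : ∀ (G : Type u) [Group G], Prop) {G : Type u} [Group G] :
    Subgroup G → Subgroup G → Prop
  | refl (H : Subgroup G) : KSubnormal F H H
  | step {H K L : Subgroup G} : KSubnormal F H K → K ≤ L →
      ((K.subgroupOf L).Normal ∨ fResidual F ↥L ≤ K.subgroupOf L) → KSubnormal F H L

/-- `M` is a modular element of the subgroup lattice of `G`. -/
def IsModularSubgroup {G : Type u} [Group G] (M : Subgroup G) : Prop :=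
  (∀ X Y : Subgroup G, X ≤ Y → (X ⊔ M) ⊓ Y = X ⊔ (M ⊓ Y)) ∧
  (∀ X Y : Subgroup G, M ≤ Y → (M ⊔ X) ⊓ Y = M ⊔ (X ⊓ Y))

/-- `Submodular H K` : a chain from `H` to `K` with each term modular in the next. -/
inductive Submodular {G : Type u} [Group G] : Subgroup G → Subgroup G → Prop
  | refl (H : Subgroup G) : Submodular H H
  | step {H K L : Subgroup G} : Submodular H K → K ≤ L →
      IsModularSubgroup (K.subgroupOf L) → Submodular H L

/-- `SubnormalIn H K` : a chain from `H` to `K` with each term normal in the next. -/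
inductive SubnormalIn {G : Type u} [Group G] : Subgroup G → Subgroup G → Prop
  | refl (H : Subgroup G) : SubnormalIn H H
  | step {H K L : Subgroup G} : SubnormalIn H K → K ≤ L →
      (K.subgroupOf L).Normal → SubnormalIn H L

/-- A group is supersolvable if it has a normal series with cyclic factors:
each term is normal in `G` and each successive term is generated by the previous
one together with a single element. -/
def IsSupersolvable (G : Type u) [Group G] : Prop :=
  ∃ (n : ℕ) (s : Fin (n + 1) → Subgroup G), s 0 = ⊥ ∧ s (Fin.last n) = ⊤ ∧
    (∀ i, (s i).Normal) ∧
    ∀ i : Fin n, ∃ g : G, s i.succ = s i.castSucc ⊔ Subgroup.zpowers g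

/-- The class 𝔘₁ of supersolvable groups of square-free exponent. -/
def U1 : ∀ (G : Type u) [Group G], Prop := fun G _ =>
  IsSupersolvable G ∧ Squarefree (Monoid.exponent G)

/-- The solvable radical: the largest normal solvable subgroup. -/
def solvRad (G : Type u) [Group G] : Subgroup G :=
  sSup {N : Subgroup G | N.Normal ∧ IsSolvable ↥N}

/-- The Fitting subgroup: the largest normal nilpotent subgroup. -/
def fitting (G : Type u) [Group G] : Subgroup G :=
  sSup {N : Subgroup G | N.Normal ∧ Group.IsNilpotent ↥N}


section AuxSubmodular

variable {G₁ : Type*} {G₂ : Type*} [Group G₁] [Group G₂]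

/-- A normal subgroup is a modular element of the subgroup lattice (Dedekind's law). -/
lemma normal_isModular (M : Subgroup G₁) [hM : M.Normal] : IsModularSubgroup M := by
  constructor
  · intro X Y hXY
    refine le_antisymm ?_ (sup_le (le_inf le_sup_left hXY)
      (le_inf (le_sup_of_le_right inf_le_left) inf_le_right))
    rintro g ⟨hg1, hg2⟩
    have : (g : G₁) ∈ (↑(X ⊔ M) : Set G₁) := hg1
    rw [Subgroup.mul_normal X M] at this
    obtain ⟨x, hx, m, hm, rfl⟩ := this
    have hmY : m ∈ Y := by
      have := mul_mem (inv_mem (hXY hx)) hg2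
      rwa [inv_mul_cancel_left] at this
    exact mul_mem (Subgroup.mem_sup_left hx) (Subgroup.mem_sup_right ⟨hm, hmY⟩)
  · intro X Y hMY
    refine le_antisymm ?_ (sup_le (le_inf le_sup_left hMY)
      (le_inf (le_sup_of_le_right inf_le_left) inf_le_right))
    rintro g ⟨hg1, hg2⟩
    have : (g : G₁) ∈ (↑(M ⊔ X) : Set G₁) := hg1
    rw [Subgroup.normal_mul M X] at this
    obtain ⟨m, hm, x, hx, rfl⟩ := this
    have hxY : x ∈ Y := by
      have := mul_mem (inv_mem (hMY hm)) hg2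
      rwa [inv_mul_cancel_left] at this
    exact mul_mem (Subgroup.mem_sup_left hm) (Subgroup.mem_sup_right ⟨hx, hxY⟩)

/-- The image of a modular subgroup under a surjective homomorphism is modular. -/
lemma isModular_map {f : G₁ →* G₂} (hf : Function.Surjective f) {K : Subgroup G₁}
    (hK : IsModularSubgroup K) : IsModularSubgroup (K.map f) := by
  have hDed := normal_isModular f.ker
  have hcs : ∀ A B : Subgroup G₂, (A ⊔ B).comap f = A.comap f ⊔ B.comap f :=
    fun A B => (Subgroup.comap_sup_eq f A B hf).symm
  constructor
  · intro X' Y' hXY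
    apply Subgroup.comap_injective hf
    simp only [Subgroup.comap_inf, hcs, Subgroup.comap_map_eq]
    set X := X'.comap f with hX
    set Y := Y'.comap f with hY
    have hXYc : X ≤ Y := Subgroup.comap_mono hXY
    have hkX : f.ker ≤ X := Subgroup.ker_le_comap f X'
    have hkY : f.ker ≤ Y := Subgroup.ker_le_comap f Y'
    have h1 : X ⊔ (K ⊔ f.ker) = X ⊔ K := by
      rw [sup_comm K f.ker, ← sup_assoc, sup_eq_left.mpr hkX]
    have h2 : (K ⊔ f.ker) ⊓ Y = (K ⊓ Y) ⊔ f.ker := by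
      rw [sup_comm K f.ker, hDed.2 K Y hkY, sup_comm]
    rw [h1, h2, hK.1 X Y hXYc, ← sup_assoc,
      sup_eq_left.mpr (le_trans hkX (le_sup_left : X ≤ X ⊔ (K ⊓ Y)))]
  · intro X' Y' hKY'
    apply Subgroup.comap_injective hf
    have hKY : K ≤ Y'.comap f := by
      have := Subgroup.comap_mono (f := f) hKY'
      rw [Subgroup.comap_map_eq] at this
      exact le_trans le_sup_left this
    simp only [Subgroup.comap_inf, hcs, Subgroup.comap_map_eq]
    set X := X'.comap f with hX
    set Y := Y'.comap f with hY
    have hkX : f.ker ≤ X := Subgroup.ker_le_comap f X'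
    have hkY : f.ker ≤ Y := Subgroup.ker_le_comap f Y'
    have h1 : (K ⊔ f.ker) ⊔ X = K ⊔ X := by rw [sup_assoc, sup_eq_right.mpr hkX]
    have h2 : (K ⊔ f.ker) ⊔ (X ⊓ Y) = K ⊔ (X ⊓ Y) := by
      rw [sup_assoc, sup_eq_right.mpr (le_inf hkX hkY)]
    rw [h1, h2, hK.2 X Y hKY]

/-- Modularity lifts along surjections when the kernel is contained in the subgroup. -/
lemma isModular_comap {f : G₁ →* G₂} (hf : Function.Surjective f) {K : Subgroup G₁}
    (hker : f.ker ≤ K) (hK : IsModularSubgroup (K.map f)) : IsModularSubgroup K := by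
  have hDed := normal_isModular f.ker
  have hcs : ∀ A B : Subgroup G₂, (A ⊔ B).comap f = A.comap f ⊔ B.comap f :=
    fun A B => (Subgroup.comap_sup_eq f A B hf).symm
  have hKc : (K.map f).comap f = K := by
    rw [Subgroup.comap_map_eq, sup_eq_left.mpr hker]
  constructor
  · intro X Y hXY
    have h3 : K ⊓ (Y ⊔ f.ker) = (K ⊓ Y) ⊔ f.ker := by
      rw [inf_comm, sup_comm Y f.ker, hDed.2 Y K hker, inf_comm Y K, sup_comm]
    have step1 : (X ⊔ K) ⊓ (Y ⊔ f.ker) = (X ⊔ (K ⊓ Y)) ⊔ f.ker := by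
      have e1 : (X.map f ⊔ K.map f).comap f = X ⊔ K := by
        rw [hcs, Subgroup.comap_map_eq, hKc]
        exact le_antisymm (sup_le (sup_le le_sup_left (hker.trans le_sup_right)) le_sup_right)
          (sup_le (le_sup_of_le_left le_sup_left) le_sup_right)
      have e2 : (Y.map f).comap f = Y ⊔ f.ker := Subgroup.comap_map_eq f Y
      calc (X ⊔ K) ⊓ (Y ⊔ f.ker) = ((X.map f ⊔ K.map f) ⊓ Y.map f).comap f := by
            rw [Subgroup.comap_inf, e1, e2]
        _ = (X.map f ⊔ (K.map f ⊓ Y.map f)).comap f := by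
            rw [hK.1 (X.map f) (Y.map f) (Subgroup.map_mono hXY)]
        _ = (X ⊔ f.ker) ⊔ (K ⊓ (Y ⊔ f.ker)) := by
            rw [hcs, Subgroup.comap_inf, Subgroup.comap_map_eq, hKc, e2]
        _ = (X ⊔ (K ⊓ Y)) ⊔ f.ker := by
            rw [h3, ← sup_sup_sup_comm, sup_idem]
    have step2 : (X ⊔ K) ⊓ Y = ((X ⊔ K) ⊓ (Y ⊔ f.ker)) ⊓ Y := by
      rw [inf_assoc, inf_eq_right.mpr (le_sup_left : Y ≤ Y ⊔ f.ker)]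
    rw [step2, step1, hDed.1 (X ⊔ (K ⊓ Y)) Y (sup_le hXY inf_le_right),
      sup_eq_left.mpr (le_sup_of_le_right (le_inf (le_trans inf_le_left hker) inf_le_right))]
  · intro X Y hKY
    have hkY : f.ker ≤ Y := le_trans hker hKY
    have e1 : (K.map f ⊔ X.map f).comap f = K ⊔ X := by
      rw [hcs, hKc, Subgroup.comap_map_eq]
      exact le_antisymm (sup_le le_sup_left (sup_le le_sup_right (hker.trans le_sup_left)))
        (sup_le le_sup_left (le_sup_of_le_right le_sup_left))
    have e2 : (Y.map f).comap f = Y := by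
      rw [Subgroup.comap_map_eq, sup_eq_left.mpr hkY]
    calc (K ⊔ X) ⊓ Y = ((K.map f ⊔ X.map f) ⊓ Y.map f).comap f := by
          rw [Subgroup.comap_inf, e1, e2]
      _ = (K.map f ⊔ (X.map f ⊓ Y.map f)).comap f := by
          rw [hK.2 (X.map f) (Y.map f) (Subgroup.map_mono hKY)]
      _ = K ⊔ ((X ⊔ f.ker) ⊓ Y) := by
          rw [hcs, Subgroup.comap_inf, hKc, Subgroup.comap_map_eq, e2]
      _ = K ⊔ (X ⊓ Y) := by
          rw [sup_comm X f.ker, hDed.2 X Y hkY, ← sup_assoc, sup_eq_left.mpr hker]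

/-- Submodularity is preserved by images of homomorphisms. -/
lemma submodular_map (f : G₁ →* G₂) {H K : Subgroup G₁} (h : Submodular H K) :
    Submodular (H.map f) (K.map f) := by
  induction h with
  | refl => exact .refl _
  | @step K L hsub hle hmod ih =>
    refine .step ih (Subgroup.map_mono hle) ?_
    have heq : (K.map f).subgroupOf (L.map f) = (K.subgroupOf L).map (f.subgroupMap L) := by
      ext ⟨y, hy⟩
      simp only [Subgroup.mem_subgroupOf, Subgroup.mem_map]
      constructor
      · rintro ⟨a, haK, ha⟩
        exact ⟨⟨a, hle haK⟩, haK, Subtype.ext ha⟩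
      · rintro ⟨⟨a, haL⟩, haK, ha⟩
        exact ⟨a, haK, congrArg Subtype.val ha⟩
    rw [heq]
    exact isModular_map (f.subgroupMap_surjective L) hmod

/-- Submodularity is preserved by preimages under surjective homomorphisms. -/
lemma submodular_comap {f : G₁ →* G₂} (hf : Function.Surjective f) {H K : Subgroup G₂}
    (h : Submodular H K) : Submodular (H.comap f) (K.comap f) := by
  induction h with
  | refl => exact .refl _
  | @step K L hsub hle hmod ih =>
    refine .step ih (Subgroup.comap_mono hle) ?_
    let g : ↥(L.comap f) →* ↥L :=
      (f.comp (L.comap f).subtype).codRestrict L (fun x => x.2)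
    have hg : Function.Surjective g := by
      rintro ⟨y, hy⟩
      obtain ⟨x, rfl⟩ := hf y
      exact ⟨⟨x, hy⟩, rfl⟩
    have hker : g.ker ≤ (K.comap f).subgroupOf (L.comap f) := by
      intro x hx
      have : f x.1 = 1 := congrArg Subtype.val hx
      simp only [Subgroup.mem_subgroupOf, Subgroup.mem_comap, this]
      exact one_mem K
    have heq : ((K.comap f).subgroupOf (L.comap f)).map g = K.subgroupOf L := by
      ext ⟨y, hy⟩
      simp only [Subgroup.mem_subgroupOf, Subgroup.mem_map]
      constructor
      · rintro ⟨⟨a, haL⟩, haK, ha⟩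
        have : f a = y := congrArg Subtype.val ha
        rwa [← this]
      · intro hyK
        obtain ⟨x, rfl⟩ := hf y
        exact ⟨⟨x, hy⟩, hyK, rfl⟩
    exact isModular_comap hg hker (by rw [heq]; exact hmod)

end AuxSubmodular

theorem stmt7 {G : Type u} [Group G] [Finite G] {N H : Subgroup G} (hN : N.Normal) :
    (Submodular H ⊤ →
      Submodular ((H ⊔ N).map (QuotientGroup.mk' N)) (⊤ : Subgroup (G ⧸ N)) ∧
      Submodular (H ⊔ N) ⊤) ∧
    (N ≤ H → Submodular (H.map (QuotientGroup.mk' N)) (⊤ : Subgroup (G ⧸ N)) →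
      Submodular H ⊤) := by
  have hπ : Function.Surjective (QuotientGroup.mk' N) := QuotientGroup.mk'_surjective N
  have hkerπ : (QuotientGroup.mk' N).ker = N := QuotientGroup.ker_mk' N
  have hconv : ∀ K : Subgroup G, Submodular (K.map (QuotientGroup.mk' N)) (⊤ : Subgroup (G ⧸ N)) →
      Submodular (K ⊔ N) ⊤ := by
    intro K hK
    have := submodular_comap hπ hK
    rwa [Subgroup.comap_top, Subgroup.comap_map_eq, hkerπ] at this
  constructor
  · intro h
    have hmapeq : (H ⊔ N).map (QuotientGroup.mk' N) = H.map (QuotientGroup.mk' N) := by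
      rw [Subgroup.map_sup, QuotientGroup.map_mk'_self, sup_bot_eq]
    have h1 : Submodular ((H ⊔ N).map (QuotientGroup.mk' N)) (⊤ : Subgroup (G ⧸ N)) := by
      have := submodular_map (QuotientGroup.mk' N) h
      rwa [Subgroup.map_top_of_surjective _ hπ, ← hmapeq] at this
    refine ⟨h1, ?_⟩
    have := hconv (H ⊔ N) h1
    rwa [sup_assoc, sup_idem] at this
  · intro hNH h
    have := hconv H h
    rwa [sup_eq_left.mpr hNH] at this
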